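/- arXiv:1304.1236 — 4 statements merged into one kernel-verified Lean document; each statement's English description precedes it below -/
import Mathlib

section
/- Let (A_n, φ_n), n = 1,2,…, and (A, φ) be algebraic probability spaces, and fix an integer k ≥ 1. Let a_n, z_{1n}, …, z_{kn} ∈ A_n be self-adjoint elements, a ∈ A self-adjoint, and ζ_1,…,ζ_k ∈ ℝ. Assume: (i) a_n converges to a in moments, and for each i, z_{in} converges in moments to ζ_i·1 (i.e. lim_n φ_n(z_{in}^m) = ζ_i^m for all m ≥ 1); (ii) each φ_n is tracial; (iii) the family {a_n, z_{1n}, …, z_{kn}} has uniformly bounded mixed moments, i.e. for each m ≥ 1, the supremum over n of the maximum of |φ_n(w)| over all words w of length m in the letters a_n, z_{1n}, …, z_{kn} is finite. Then for every noncommutative polynomial p(x, y_1, …, y_k) with complex coefficients and every m ≥ 1, lim_{n→∞} φ_n( p(a_n, z_{1n}, …, z_{kn})^m ) = φ( p(a, ζ_1·1, …, ζ_k·1)^m ). -/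
open Filter Topology
open scoped ComplexOrder


section CS
variable {A : Type*} [Ring A] [Algebra ℂ A] [StarRing A] [StarModule ℂ A]
variable (ψ : A →ₗ[ℂ] ℂ)

lemma state_expand (t s : ℂ) (x y : A) :
    ψ (star (t • x + s • y) * (t • x + s • y)) =
      (starRingEnd ℂ t) * t * ψ (star x * x) + (starRingEnd ℂ t) * s * ψ (star x * y)
      + (starRingEnd ℂ s) * t * ψ (star y * x) + (starRingEnd ℂ s) * s * ψ (star y * y) := by
  simp only [star_add, star_smul, add_mul, mul_add, smul_mul_assoc, mul_smul_comm,
    map_add, map_smul, smul_eq_mul, Complex.star_def, smul_smul]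
  ring

lemma state_hermitian (hpos : ∀ a, 0 ≤ ψ (star a * a)) (x y : A) :
    ψ (star y * x) = starRingEnd ℂ (ψ (star x * y)) := by
  have him : ∀ a : A, (ψ (star a * a)).im = 0 := fun a => ((Complex.nonneg_iff.1 (hpos a)).2).symm
  have e1 : (ψ (star ((1:ℂ) • x + (1:ℂ) • y) * ((1:ℂ) • x + (1:ℂ) • y))).im = 0 := him _
  have e2 : (ψ (star ((1:ℂ) • x + Complex.I • y) * ((1:ℂ) • x + Complex.I • y))).im = 0 := him _
  rw [state_expand] at e1 e2
  simp only [map_one, one_mul, mul_one, Complex.add_im, him, Complex.conj_I, neg_mul,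
    Complex.I_mul_I, neg_neg, one_mul, Complex.neg_im] at e1 e2
  set a1 := ψ (star x * y)
  set a2 := ψ (star y * x)
  have e2' : (Complex.I * a1).im - (Complex.I * a2).im = 0 := by linarith
  simp only [Complex.mul_im, Complex.I_re, Complex.I_im, zero_mul, one_mul, zero_add,
    mul_zero, add_zero] at e2'
  apply Complex.ext
  · simp only [Complex.conj_re]; linarith
  · simp only [Complex.conj_im]; linarith

lemma state_cauchy_schwarz (hpos : ∀ a, 0 ≤ ψ (star a * a)) (x y : A) :
    ‖ψ (star x * y)‖ ^ 2 ≤ (ψ (star x * x)).re * (ψ (star y * y)).re := by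
  have him : ∀ a : A, (ψ (star a * a)).im = 0 := fun a => ((Complex.nonneg_iff.1 (hpos a)).2).symm
  set A0 := ψ (star x * y) with hA0
  set p := (ψ (star x * x)).re with hp0
  set q := (ψ (star y * y)).re with hq0
  have hp : 0 ≤ p := (Complex.nonneg_iff.1 (hpos x)).1
  have hq : 0 ≤ q := (Complex.nonneg_iff.1 (hpos y)).1
  by_cases hA : A0 = 0
  · rw [hA]; simpa using mul_nonneg hp hq
  have hxx : ψ (star x * x) = (p : ℂ) := by
    apply Complex.ext
    · simp [hp0]
    · simp [him x]
  have hyy : ψ (star y * y) = (q : ℂ) := by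
    apply Complex.ext
    · simp [hq0]
    · simp [him y]
  have herm := state_hermitian ψ hpos x y
  have h1 : starRingEnd ℂ A0 * A0 = (‖A0‖ : ℂ) ^ 2 := by
    rw [mul_comm, Complex.mul_conj, Complex.normSq_eq_norm_sq]; push_cast; ring
  have h2 : A0 * starRingEnd ℂ A0 = (‖A0‖ : ℂ) ^ 2 := by
    rw [Complex.mul_conj, Complex.normSq_eq_norm_sq]; push_cast; ring
  have key : ∀ t : ℝ, 0 ≤ p * (t * t) + (2 * ‖A0‖ ^ 2) * t + ‖A0‖ ^ 2 * q := by
    intro t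
    have hpos' := hpos ((t : ℂ) • x + (starRingEnd ℂ A0) • y)
    rw [state_expand] at hpos'
    have heq : (starRingEnd ℂ (t:ℂ)) * (t:ℂ) * ψ (star x * x)
        + (starRingEnd ℂ (t:ℂ)) * (starRingEnd ℂ A0) * ψ (star x * y)
        + (starRingEnd ℂ (starRingEnd ℂ A0)) * (t:ℂ) * ψ (star y * x)
        + (starRingEnd ℂ (starRingEnd ℂ A0)) * (starRingEnd ℂ A0) * ψ (star y * y)
        = ((p * (t * t) + (2 * ‖A0‖ ^ 2) * t + ‖A0‖ ^ 2 * q : ℝ) : ℂ) := by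
      rw [hxx, hyy, herm, ← hA0, Complex.conj_ofReal, Complex.conj_conj]
      push_cast
      linear_combination (t : ℂ) * h1 + ((t : ℂ) + (q : ℂ)) * h2
    rw [heq] at hpos'
    have h3 := (Complex.nonneg_iff.1 hpos').1
    rwa [Complex.ofReal_re] at h3
  have hd := discrim_le_zero key
  rw [discrim] at hd
  have habs : 0 < ‖A0‖ ^ 2 := by
    have := norm_pos_iff.mpr hA; positivity
  nlinarith [hd, habs]
end CS


lemma star_list_prod_sa {A : Type*} [Monoid A] [StarMul A] (l : List A)
    (h : ∀ x ∈ l, star x = x) : star l.prod = l.reverse.prod := by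
  induction l with
  | nil => simp
  | cons x l ih =>
    simp only [List.prod_cons, star_mul, List.reverse_cons, List.prod_append,
      List.prod_cons, List.prod_nil, mul_one]
    rw [ih (fun y hy => h y (List.mem_cons_of_mem x hy)), h x List.mem_cons_self]

section Key
variable (A : ℕ → Type*) [∀ n, Ring (A n)] [∀ n, Algebra ℂ (A n)]
    [∀ n, StarRing (A n)] [∀ n, StarModule ℂ (A n)]
    (B : Type*) [Ring B] [Algebra ℂ B] [StarRing B] [StarModule ℂ B]
    (φn : ∀ n, A n →ₗ[ℂ] ℂ) (φ : B →ₗ[ℂ] ℂ)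

lemma key_word
    (hφn_unital : ∀ n, φn n 1 = 1) (hφn_pos : ∀ n a, 0 ≤ φn n (star a * a))
    (hφ_unital : φ 1 = 1)
    (k : ℕ)
    (a : ∀ n, A n) (z : Fin k → ∀ n, A n) (b : B) (ζ : Fin k → ℝ)
    (ha_sa : ∀ n, star (a n) = a n) (hz_sa : ∀ i n, star (z i n) = z i n)
    (hconv_a : ∀ m : ℕ, 1 ≤ m → Tendsto (fun n => φn n (a n ^ m)) atTop (𝓝 (φ (b ^ m))))
    (hconv_z : ∀ i, ∀ m : ℕ, 1 ≤ m →
      Tendsto (fun n => φn n (z i n ^ m)) atTop (𝓝 ((ζ i : ℂ) ^ m)))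
    (htracial : ∀ n, ∀ x y : A n, φn n (x * y) = φn n (y * x))
    (hbdd : ∀ m : ℕ, 1 ≤ m → ∃ C : ℝ, ∀ n, ∀ w : List (Fin (k + 1)), w.length = m →
      ‖φn n ((w.map fun i =>
        (Fin.cases (a n) (fun j => z j n) i : A n)).prod)‖ ≤ C) :
    ∀ (N : ℕ) (w : List (Fin (k+1))), w.length ≤ N →
      Tendsto (fun n => φn n ((w.map fun i =>
          (Fin.cases (a n) (fun j => z j n) i : A n)).prod))
        atTop
        (𝓝 (φ ((w.map fun i =>
          (Fin.cases b (fun j => (ζ j : ℂ) • (1 : B)) i : B)).prod))) := by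
  intro N
  induction N with
  | zero =>
    intro w hw
    have hwnil : w = [] := List.length_eq_zero_iff.1 (Nat.le_zero.1 hw)
    subst hwnil
    simp only [List.map_nil, List.prod_nil, hφ_unital, hφn_unital]
    exact tendsto_const_nhds
  | succ N ih =>
    intro w hw
    by_cases hall : ∀ x ∈ w, x = (0 : Fin (k+1))
    · -- all letters are `a`
      have hA : ∀ n, (w.map fun i => (Fin.cases (a n) (fun j => z j n) i : A n)).prod
          = a n ^ w.length := by
        intro n
        rw [show (w.map fun i => (Fin.cases (a n) (fun j => z j n) i : A n))
            = List.replicate w.length (a n) from ?_, List.prod_replicate]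
        rw [List.eq_replicate_iff]
        refine ⟨List.length_map _, fun x hx => ?_⟩
        obtain ⟨y, hy, rfl⟩ := List.mem_map.1 hx
        rw [hall y hy]
        rfl
      have hB : (w.map fun i => (Fin.cases b (fun j => (ζ j : ℂ) • (1 : B)) i : B)).prod
          = b ^ w.length := by
        rw [show (w.map fun i => (Fin.cases b (fun j => (ζ j : ℂ) • (1 : B)) i : B))
            = List.replicate w.length b from ?_, List.prod_replicate]
        rw [List.eq_replicate_iff]
        refine ⟨List.length_map _, fun x hx => ?_⟩
        obtain ⟨y, hy, rfl⟩ := List.mem_map.1 hx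
        rw [hall y hy]
        rfl
      simp only [hA, hB]
      rcases Nat.eq_zero_or_pos w.length with h0 | h1
      · simp only [h0, pow_zero, hφ_unital, hφn_unital]
        exact tendsto_const_nhds
      · exact hconv_a w.length h1
    · push_neg at hall
      obtain ⟨j, hjmem, hjne⟩ := hall
      obtain ⟨u, v, huv⟩ := List.append_of_mem hjmem
      obtain ⟨i, rfl⟩ := Fin.eq_succ_of_ne_zero hjne
      subst huv
      -- notation
      set s : ℂ := ((ζ i : ℝ) : ℂ) with hs
      -- the main pointwise identity
      have main : ∀ n, φn n (((u ++ i.succ :: v).map fun idx =>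
            (Fin.cases (a n) (fun j => z j n) idx : A n)).prod)
          = s * φn n (((u ++ v).map fun idx =>
              (Fin.cases (a n) (fun j => z j n) idx : A n)).prod)
            + φn n ((((v ++ u).map fun idx =>
              (Fin.cases (a n) (fun j => z j n) idx : A n)).prod) * (z i n - s • 1)) := by
        intro n
        set U := (u.map fun idx => (Fin.cases (a n) (fun j => z j n) idx : A n)).prod with hU
        set V := (v.map fun idx => (Fin.cases (a n) (fun j => z j n) idx : A n)).prod with hV
        set Z := z i n with hZ
        simp only [List.map_append, List.prod_append, List.map_cons, List.prod_cons,
          Fin.cases_succ, ← hU, ← hV, ← hZ]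
        have t1 : φn n (U * (Z * V)) = φn n ((V * U) * Z) := by
          rw [htracial n U (Z * V), mul_assoc Z V U, htracial n Z (V * U)]
        have t2 : φn n ((V * U) * (Z - s • 1)) = φn n ((V * U) * Z) - s * φn n (V * U) := by
          rw [mul_sub, map_sub]
          congr 1
          rw [mul_smul_comm, mul_one, map_smul, smul_eq_mul]
        have t3 : φn n (U * V) = φn n (V * U) := htracial n U V
        rw [t1, t2, t3]
        ring
      -- the B-side identity
      have hBside : φ (((u ++ i.succ :: v).map fun idx =>
            (Fin.cases b (fun j => (ζ j : ℂ) • (1 : B)) idx : B)).prod)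
          = s * φ (((u ++ v).map fun idx =>
              (Fin.cases b (fun j => (ζ j : ℂ) • (1 : B)) idx : B)).prod) := by
        simp only [List.map_append, List.prod_append, List.map_cons, List.prod_cons,
          Fin.cases_succ, smul_mul_assoc, one_mul, mul_smul_comm, map_smul, smul_eq_mul, hs]
      -- the error term tends to zero
      have hE : Tendsto (fun n => φn n ((((v ++ u).map fun idx =>
            (Fin.cases (a n) (fun j => z j n) idx : A n)).prod) * (z i n - s • 1)))
          atTop (𝓝 0) := by
        -- self-adjointness of c n
        have hc_sa : ∀ n, star (z i n - s • (1 : A n)) = z i n - s • 1 := by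
          intro n
          rw [star_sub, hz_sa i n, star_smul, star_one, hs]
          norm_num [Complex.star_def, Complex.conj_ofReal]
        -- star of W
        have hW_star : ∀ n, star (((v ++ u).map fun idx =>
              (Fin.cases (a n) (fun j => z j n) idx : A n)).prod)
            = (((v ++ u).map fun idx =>
              (Fin.cases (a n) (fun j => z j n) idx : A n)).reverse).prod := by
          intro n
          apply star_list_prod_sa
          intro x hx
          obtain ⟨y, hy, rfl⟩ := List.mem_map.1 hx
          induction y using Fin.cases with
          | zero => exact ha_sa n
          | succ j => exact hz_sa j n
        have hWW : ∀ n, (((v ++ u).map fun idx =>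
              (Fin.cases (a n) (fun j => z j n) idx : A n)).prod)
              * star (((v ++ u).map fun idx =>
              (Fin.cases (a n) (fun j => z j n) idx : A n)).prod)
            = ((((v ++ u) ++ (v ++ u).reverse).map fun idx =>
              (Fin.cases (a n) (fun j => z j n) idx : A n)).prod) := by
          intro n
          rw [hW_star n]
          simp [List.map_append, List.map_reverse, List.prod_append, List.reverse_append,
            mul_assoc]
        -- uniform bound
        have hCbd : ∃ C : ℝ, ∀ n, (φn n ((((v ++ u).map fun idx =>
              (Fin.cases (a n) (fun j => z j n) idx : A n)).prod)
              * star (((v ++ u).map fun idx =>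
              (Fin.cases (a n) (fun j => z j n) idx : A n)).prod))).re ≤ C := by
          rcases Nat.eq_zero_or_pos (v ++ u).length with h0 | h1
          · have hnil : v ++ u = [] := List.length_eq_zero_iff.1 h0
            refine ⟨1, fun n => ?_⟩
            rw [hWW n, hnil]
            simp [hφn_unital n]
          · obtain ⟨C, hC⟩ := hbdd ((v ++ u) ++ (v ++ u).reverse).length
              (by rw [List.length_append, List.length_reverse]; omega)
            refine ⟨C, fun n => ?_⟩
            rw [hWW n]
            exact le_trans (Complex.re_le_norm _) (hC n _ rfl)
        obtain ⟨C, hC⟩ := hCbd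
        -- r n → 0
        have hr0 : ∀ n, (0:ℝ) ≤ (φn n ((z i n - s • 1) * (z i n - s • 1))).re := by
          intro n
          have := hφn_pos n (z i n - s • 1)
          rw [hc_sa n] at this
          exact (Complex.nonneg_iff.1 this).1
        have hrc : Tendsto (fun n => φn n ((z i n - s • 1) * (z i n - s • 1)))
            atTop (𝓝 0) := by
          have hexp : ∀ n, φn n ((z i n - s • 1) * (z i n - s • 1))
              = φn n (z i n ^ 2) - (2 * s) * φn n (z i n ^ 1) + s * s := by
            intro n
            have : (z i n - s • 1) * (z i n - s • 1)
                = z i n ^ 2 - s • (z i n) - s • (z i n) + (s * s) • (1 : A n) := by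
              simp only [sub_mul, mul_sub, smul_mul_assoc, mul_smul_comm, one_mul,
                mul_one, smul_smul, smul_sub, sub_smul, pow_two]
              abel
            rw [this]
            simp only [map_add, map_sub, map_smul, smul_eq_mul, hφn_unital n, mul_one, pow_one]
            ring
          simp only [hexp]
          have h2 := hconv_z i 2 (by norm_num)
          have h1 := hconv_z i 1 (by norm_num)
          have : Tendsto (fun n => φn n (z i n ^ 2) - (2 * s) * φn n (z i n ^ 1) + s * s)
              atTop (𝓝 (s ^ 2 - (2 * s) * s ^ 1 + s * s)) :=
            ((h2.sub (h1.const_mul (2 * s))).add_const (s * s))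
          rw [show s ^ 2 - (2 * s) * s ^ 1 + s * s = 0 by ring] at this
          exact this
        have hr : Tendsto (fun n => (φn n ((z i n - s • 1) * (z i n - s • 1))).re)
            atTop (𝓝 0) := by
          have := (Complex.continuous_re.tendsto 0).comp hrc
          simpa [Function.comp_def] using this
        -- Cauchy–Schwarz bound
        have habs : ∀ n, ‖φn n ((((v ++ u).map fun idx =>
              (Fin.cases (a n) (fun j => z j n) idx : A n)).prod) * (z i n - s • 1))‖
            ≤ Real.sqrt (C * (φn n ((z i n - s • 1) * (z i n - s • 1))).re) := by
          intro n
          set W := ((v ++ u).map fun idx =>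
            (Fin.cases (a n) (fun j => z j n) idx : A n)).prod with hWdef
          have cs := state_cauchy_schwarz (φn n) (hφn_pos n) (star W) (z i n - s • 1)
          rw [star_star, hc_sa n] at cs
          have hb2 : ‖φn n (W * (z i n - s • 1))‖ ^ 2
              ≤ C * (φn n ((z i n - s • 1) * (z i n - s • 1))).re := by
            refine le_trans cs ?_
            exact mul_le_mul_of_nonneg_right (hC n) (hr0 n)
          have := Real.sqrt_le_sqrt hb2
          rwa [Real.sqrt_sq (norm_nonneg _)] at this
        have hsq : Tendsto (fun n => Real.sqrt (C * (φn n ((z i n - s • 1)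
            * (z i n - s • 1))).re)) atTop (𝓝 0) := by
          have h1 : Tendsto (fun n => C * (φn n ((z i n - s • 1) * (z i n - s • 1))).re)
              atTop (𝓝 0) := by
            have := hr.const_mul C
            simpa using this
          have := (Real.continuous_sqrt.tendsto 0).comp h1
          simpa [Function.comp_def] using this
        rw [tendsto_zero_iff_norm_tendsto_zero]
        apply squeeze_zero (fun n => norm_nonneg _) _ hsq
        intro n
        exact habs n
      -- combine
      have hlen : (u ++ v).length ≤ N := by
        have h := hw
        rw [List.length_append, List.length_cons] at h
        rw [List.length_append]
        omega
      have hIH := ih (u ++ v) hlen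
      rw [hBside]
      have := (hIH.const_mul s).add hE
      rw [add_zero] at this
      apply Tendsto.congr _ this
      intro n
      exact (main n).symm
end Key

lemma exists_word_of_forall_range {X : Type*} (l : List (FreeAlgebra ℂ X))
    (hl : ∀ y ∈ l, y ∈ Set.range (FreeAlgebra.ι ℂ)) :
    ∃ w : List X, w.map (FreeAlgebra.ι ℂ) = l := by
  induction l with
  | nil => exact ⟨[], rfl⟩
  | cons x l ihl =>
    obtain ⟨w, hw⟩ := ihl (fun y hy => hl y (List.mem_cons_of_mem x hy))
    obtain ⟨i, rfl⟩ := hl x List.mem_cons_self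
    exact ⟨i :: w, by rw [List.map_cons, hw]⟩


/-- Proposition 2.2: convergence of mixed moments of noncommutative polynomials.
Given algebraic probability spaces `(A_n, φ_n)` and `(B, φ)`, self-adjoint elements
`a_n, z_{1n}, …, z_{kn} ∈ A_n` and `b ∈ B`, real numbers `ζ_1, …, ζ_k`, such that
(i) `a_n → b` and `z_{in} → ζ_i·1` in moments, (ii) each `φ_n` is tracial, and
(iii) `{a_n, z_{1n}, …, z_{kn}}` have uniformly bounded mixed moments, the moments of
`p(a_n, z_{1n}, …, z_kn)` converge to those of `p(b, ζ_1·1, …, ζ_k·1)` for every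
noncommutative polynomial `p` (an element of the free `ℂ`-algebra on `k + 1` generators,
generator `0` standing for `x` and generator `i + 1` for `y_i`). -/
theorem moments_of_noncommutative_polynomial_converge
    (A : ℕ → Type*) [∀ n, Ring (A n)] [∀ n, Algebra ℂ (A n)]
    [∀ n, StarRing (A n)] [∀ n, StarModule ℂ (A n)]
    (B : Type*) [Ring B] [Algebra ℂ B] [StarRing B] [StarModule ℂ B]
    (φn : ∀ n, A n →ₗ[ℂ] ℂ) (φ : B →ₗ[ℂ] ℂ)
    (hφn_unital : ∀ n, φn n 1 = 1) (hφn_pos : ∀ n a, 0 ≤ φn n (star a * a))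
    (hφ_unital : φ 1 = 1) (hφ_pos : ∀ x, 0 ≤ φ (star x * x))
    (k : ℕ) (hk : 1 ≤ k)
    (a : ∀ n, A n) (z : Fin k → ∀ n, A n) (b : B) (ζ : Fin k → ℝ)
    (ha_sa : ∀ n, star (a n) = a n) (hz_sa : ∀ i n, star (z i n) = z i n)
    (hb_sa : star b = b)
    -- (i) convergence in moments
    (hconv_a : ∀ m : ℕ, 1 ≤ m → Tendsto (fun n => φn n (a n ^ m)) atTop (𝓝 (φ (b ^ m))))
    (hconv_z : ∀ i, ∀ m : ℕ, 1 ≤ m →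
      Tendsto (fun n => φn n (z i n ^ m)) atTop (𝓝 ((ζ i : ℂ) ^ m)))
    -- (ii) traciality
    (htracial : ∀ n, ∀ x y : A n, φn n (x * y) = φn n (y * x))
    -- (iii) uniformly bounded mixed moments: words of length `m` in the letters
    -- `a_n, z_{1n}, …, z_{kn}` have state values bounded uniformly in `n`
    (hbdd : ∀ m : ℕ, 1 ≤ m → ∃ C : ℝ, ∀ n, ∀ w : List (Fin (k + 1)), w.length = m →
      ‖φn n ((w.map fun i =>
        (Fin.cases (a n) (fun j => z j n) i : A n)).prod)‖ ≤ C)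
    (p : FreeAlgebra ℂ (Fin (k + 1))) (m : ℕ) (hm : 1 ≤ m) :
    Tendsto
      (fun n => φn n ((FreeAlgebra.lift ℂ
        (fun i => (Fin.cases (a n) (fun j => z j n) i : A n)) p) ^ m))
      atTop
      (𝓝 (φ ((FreeAlgebra.lift ℂ
        (fun i => (Fin.cases b (fun j => (ζ j : ℂ) • (1 : B)) i : B)) p) ^ m))) := by
  have keyW : ∀ w : List (Fin (k+1)),
      Tendsto (fun n => φn n ((w.map fun i =>
          (Fin.cases (a n) (fun j => z j n) i : A n)).prod))
        atTop
        (𝓝 (φ ((w.map fun i =>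
          (Fin.cases b (fun j => (ζ j : ℂ) • (1 : B)) i : B)).prod))) := fun w =>
    key_word A B φn φ hφn_unital hφn_pos hφ_unital k a z b ζ ha_sa hz_sa
      hconv_a hconv_z htracial hbdd w.length w le_rfl
  have S : ∀ q : FreeAlgebra ℂ (Fin (k+1)),
      Tendsto (fun n => φn n (FreeAlgebra.lift ℂ
          (fun i => (Fin.cases (a n) (fun j => z j n) i : A n)) q)) atTop
        (𝓝 (φ (FreeAlgebra.lift ℂ
          (fun i => (Fin.cases b (fun j => (ζ j : ℂ) • (1 : B)) i : B)) q))) := by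
    intro q
    have hq : q ∈ Submodule.span ℂ
        ((Submonoid.closure (Set.range (FreeAlgebra.ι ℂ)) :
          Submonoid (FreeAlgebra ℂ (Fin (k+1)))) : Set _) := by
      rw [← Algebra.adjoin_eq_span]
      have htop : Algebra.adjoin ℂ (Set.range (FreeAlgebra.ι ℂ (X := Fin (k+1)))) = ⊤ := by
        rw [eq_top_iff]
        intro x _
        induction x using FreeAlgebra.induction with
        | grade0 r => exact Subalgebra.algebraMap_mem _ r
        | grade1 x => exact Algebra.subset_adjoin ⟨x, rfl⟩
        | mul a b ha hb => exact mul_mem (ha trivial) (hb trivial)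
        | add a b ha hb => exact add_mem (ha trivial) (hb trivial)
      rw [htop]
      trivial
    induction hq using Submodule.span_induction with
    | mem x hx =>
      obtain ⟨l, hl, rfl⟩ := Submonoid.exists_list_of_mem_closure hx
      obtain ⟨w, rfl⟩ := exists_word_of_forall_range l hl
      have hAn : ∀ n, FreeAlgebra.lift ℂ
          (fun i => (Fin.cases (a n) (fun j => z j n) i : A n))
          ((w.map (FreeAlgebra.ι ℂ)).prod)
          = (w.map fun i => (Fin.cases (a n) (fun j => z j n) i : A n)).prod := by
        intro n
        rw [map_list_prod, List.map_map]
        congr 1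
        simp [Function.comp_def, FreeAlgebra.lift_ι_apply]
      have hBn : FreeAlgebra.lift ℂ
          (fun i => (Fin.cases b (fun j => (ζ j : ℂ) • (1 : B)) i : B))
          ((w.map (FreeAlgebra.ι ℂ)).prod)
          = (w.map fun i => (Fin.cases b (fun j => (ζ j : ℂ) • (1 : B)) i : B)).prod := by
        rw [map_list_prod, List.map_map]
        congr 1
        simp [Function.comp_def, FreeAlgebra.lift_ι_apply]
      simp only [hAn, hBn]
      exact keyW w
    | zero => simp only [map_zero]; exact tendsto_const_nhds
    | add x y hx hy ihx ihy =>
      simp only [map_add]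
      exact ihx.add ihy
    | smul c x hx ihx =>
      simp only [map_smul, smul_eq_mul]
      exact ihx.const_mul c
  have := S (p ^ m)
  simpa only [map_pow] using this
end

section
/- (Commutative law of large numbers.) Let (A, φ) be an algebraic probability space and b ∈ A a self-adjoint element. For N ≥ 1 let b(i) = 1⊗…⊗b⊗…⊗1 ∈ A^{⊗N} (b at the i-th tensor factor) and b^{(N,1)} = Σ_{i=1}^N b(i). Then b^{(N,1)}/N converges in moments, with respect to the product states φ^{⊗N}, to φ(b)·1; that is, for every integer m ≥ 1, lim_{N→∞} φ^{⊗N}( (b^{(N,1)}/N)^m ) = φ(b)^m. -/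
open scoped TensorProduct ComplexOrder
open Filter Topology

noncomputable section

/-- The product state `φ^{⊗N}` on the `N`-fold algebraic tensor power `A^{⊗N}`,
determined by `φ^{⊗N}(a_1 ⊗ ⋯ ⊗ a_N) = φ(a_1) ⋯ φ(a_N)`. -/
def prodState {A : Type*} [Ring A] [Algebra ℂ A] (φ : A →ₗ[ℂ] ℂ) (N : ℕ) :
    (⨂[ℂ] _ : Fin N, A) →ₗ[ℂ] ℂ :=
  PiTensorProduct.lift ((MultilinearMap.mkPiAlgebra ℂ (Fin N) ℂ).compLinearMap fun _ => φ)

/-- `b(i) = 1 ⊗ ⋯ ⊗ b ⊗ ⋯ ⊗ 1 ∈ A^{⊗N}` with `b` at the `i`-th tensor factor. -/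
def elemAt {A : Type*} [Ring A] [Algebra ℂ A] (b : A) (N : ℕ) (i : Fin N) :
    ⨂[ℂ] _ : Fin N, A :=
  PiTensorProduct.tprod ℂ (Function.update (fun _ => (1 : A)) i b)

/-- `b^{(N,n)} = ∑_{1 ≤ i_1 < ⋯ < i_n ≤ N} b(i_1) ⋯ b(i_n)` (and `b^{(N,0)} = 1`). -/
def bPow {A : Type*} [Ring A] [Algebra ℂ A] (b : A) (N n : ℕ) : ⨂[ℂ] _ : Fin N, A :=
  ∑ s ∈ Finset.powersetCard n (Finset.univ : Finset (Fin N)),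
    ((s.sort (· ≤ ·)).map (elemAt b N)).prod

/-- `F^{(N,n)}(y)`: the sum, over all ways to choose `n` distinct tensor positions and
to place `y` at one of them and `b` at the other `n - 1` (with `1` elsewhere), of the
corresponding elementary tensors. -/
def Fsum {A : Type*} [Ring A] [Algebra ℂ A] (b y : A) (N n : ℕ) : ⨂[ℂ] _ : Fin N, A :=
  ∑ s ∈ Finset.powersetCard n (Finset.univ : Finset (Fin N)), ∑ i ∈ s,
    PiTensorProduct.tprod ℂ (fun j => if j = i then y else if j ∈ s then b else 1)

section Aux

variable {A : Type*} [Ring A] [Algebra ℂ A]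

lemma prodState_tprod (φ : A →ₗ[ℂ] ℂ) {N : ℕ} (f : Fin N → A) :
    prodState φ N (PiTensorProduct.tprod ℂ f) = ∏ j, φ (f j) := by
  simp [prodState]

lemma list_prod_elemAt (b : A) (N : ℕ) (l : List (Fin N)) :
    (l.map (elemAt b N)).prod
      = PiTensorProduct.tprod ℂ (fun j => b ^ (l.count j)) := by
  induction l with
  | nil =>
    simp only [List.map_nil, List.prod_nil, List.count_nil, pow_zero, PiTensorProduct.one_def]
    rfl
  | cons i l ih =>
    rw [List.map_cons, List.prod_cons, ih, elemAt, PiTensorProduct.tprod_mul_tprod]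
    congr 1
    funext j
    by_cases h : j = i
    · subst h
      simp [List.count_cons, pow_succ']
    · simp [Function.update_of_ne h, List.count_cons, h, Ne.symm h]

lemma bPow_one (b : A) (N : ℕ) : bPow b N 1 = ∑ i, elemAt b N i := by
  rw [bPow, Finset.powersetCard_one, Finset.sum_map]
  refine Finset.sum_congr rfl fun i _ => ?_
  simp [Finset.sort_singleton]

lemma sum_pow_list {R : Type*} [Ring R] {ι : Type*} [Fintype ι] (a : ι → R) (m : ℕ) :
    (∑ i, a i) ^ m
      = ∑ f : Fin m → ι, ((List.finRange m).map (fun k => a (f k))).prod := by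
  induction m with
  | zero => simp
  | succ n ih =>
    rw [pow_succ', ih, Finset.mul_sum]
    rw [← (Fin.consEquiv (fun _ : Fin (n+1) => ι)).sum_comp]
    rw [Fintype.sum_prod_type]
    simp only [Fin.consEquiv_apply, List.finRange_succ, List.map_cons, List.prod_cons,
      List.map_map, Function.comp_def, Fin.cons_succ, Fin.cons_zero]
    rw [Finset.sum_comm]
    refine Finset.sum_congr rfl fun f _ => ?_
    rw [Finset.sum_mul]

lemma prodState_bPow_pow (φ : A →ₗ[ℂ] ℂ) (b : A) (N m : ℕ) :
    prodState φ N ((bPow b N 1) ^ m)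
      = ∑ f : Fin m → Fin N, ∏ j, φ (b ^ (((List.finRange m).map f).count j)) := by
  rw [bPow_one, sum_pow_list, map_sum]
  refine Finset.sum_congr rfl fun f _ => ?_
  rw [show (List.finRange m).map (fun k => elemAt b N (f k))
      = (((List.finRange m).map f).map (elemAt b N)) by rw [List.map_map]; rfl,
    list_prod_elemAt, prodState_tprod]

lemma prod_count_inj (φ : A →ₗ[ℂ] ℂ) (hφ1 : φ 1 = 1) (b : A) {N m : ℕ}
    (f : Fin m → Fin N) (hf : Function.Injective f) :
    ∏ j, φ (b ^ (((List.finRange m).map f).count j)) = φ b ^ m := by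
  set l := (List.finRange m).map f with hl
  have hnd : l.Nodup := (List.nodup_finRange m).map hf
  have key : ∀ j : Fin N, φ (b ^ l.count j) = if j ∈ l then φ b else 1 := by
    intro j
    by_cases h : j ∈ l
    · rw [List.count_eq_one_of_mem hnd h, pow_one, if_pos h]
    · rw [List.count_eq_zero_of_not_mem h, pow_zero, hφ1, if_neg h]
  calc ∏ j, φ (b ^ l.count j) = ∏ j, if j ∈ l then φ b else 1 :=
        Finset.prod_congr rfl (fun j _ => key j)
    _ = ∏ j ∈ Finset.univ.filter (· ∈ l), φ b := (Finset.prod_filter _ _).symm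
    _ = φ b ^ (Finset.univ.filter (· ∈ l)).card := Finset.prod_const _
    _ = φ b ^ m := by
        congr 1
        have h2 : Finset.univ.filter (· ∈ l) = l.toFinset := by ext j; simp
        rw [h2, List.toFinset_card_of_nodup hnd, hl, List.length_map, List.length_finRange]

lemma prod_count_bound (φ : A →ₗ[ℂ] ℂ) (hφ1 : φ 1 = 1) (b : A) {N m : ℕ}
    (C : ℝ) (hC1 : 1 ≤ C) (hC : ∀ k ≤ m, ‖φ (b ^ k)‖ ≤ C) (f : Fin m → Fin N) :
    ‖∏ j, φ (b ^ (((List.finRange m).map f).count j))‖ ≤ C ^ m := by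
  set l := (List.finRange m).map f with hl
  have hlen : l.length = m := by rw [hl, List.length_map, List.length_finRange]
  rw [norm_prod]
  set t := Finset.image f Finset.univ with ht
  have hmem : ∀ j : Fin N, j ∉ t → ‖φ (b ^ l.count j)‖ = 1 := by
    intro j hj
    have hjl : j ∉ l := by
      intro h
      rw [hl, List.mem_map] at h
      obtain ⟨k, _, hk⟩ := h
      exact hj (Finset.mem_image.2 ⟨k, Finset.mem_univ k, hk⟩)
    rw [List.count_eq_zero_of_not_mem hjl, pow_zero, hφ1, norm_one]
  calc (∏ j, ‖φ (b ^ l.count j)‖) = ∏ j ∈ t, ‖φ (b ^ l.count j)‖ :=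
        (Finset.prod_subset t.subset_univ (fun j _ hj => hmem j hj)).symm
    _ ≤ ∏ _j ∈ t, C := Finset.prod_le_prod (fun _ _ => norm_nonneg _)
        (fun j _ => hC _ (hlen ▸ List.count_le_length))
    _ = C ^ t.card := Finset.prod_const C
    _ ≤ C ^ m := pow_le_pow_right₀ hC1
        (le_trans Finset.card_image_le (by simp))

lemma card_injective_fun (m N : ℕ) :
    (Finset.univ.filter (fun f : Fin m → Fin N => Function.Injective f)).card
      = N.descFactorial m := by
  rw [← Fintype.card_subtype,
    Fintype.card_congr (Equiv.subtypeInjectiveEquivEmbedding (Fin m) (Fin N)),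
    Fintype.card_embedding_eq, Fintype.card_fin, Fintype.card_fin]

lemma desc_ratio (m : ℕ) :
    Tendsto (fun N : ℕ => (N.descFactorial m : ℝ) / (N : ℝ) ^ m) atTop (𝓝 1) := by
  have h : ∀ N : ℕ, (N.descFactorial m : ℝ) / (N : ℝ) ^ m
      = ∏ i ∈ Finset.range m, ((N - i : ℕ) : ℝ) / (N : ℝ) := by
    intro N
    rw [Nat.descFactorial_eq_prod_range, Nat.cast_prod, Finset.prod_div_distrib,
      Finset.prod_const, Finset.card_range]
  simp only [h]
  have h1 : (1 : ℝ) = ∏ _i ∈ Finset.range m, (1 : ℝ) := by simp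
  rw [h1]
  refine tendsto_finset_prod _ fun i _ => ?_
  have h2 : Tendsto (fun N : ℕ => 1 - (i : ℝ) / N) atTop (𝓝 1) := by
    have h3 := tendsto_const_div_atTop_nhds_zero_nat (i : ℝ)
    simpa using tendsto_const_nhds.sub h3
  refine h2.congr' ?_
  filter_upwards [eventually_ge_atTop i, eventually_ge_atTop 1] with N hN hN1
  have hN0 : (N : ℝ) ≠ 0 := by positivity
  rw [Nat.cast_sub hN, sub_div, div_self hN0]

end Aux

/-- **Commutative law of large numbers** (Theorem 3.1). For a self-adjoint element `b`
of an algebraic probability space `(A, φ)`, the averages `b^{(N,1)}/N` converge in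
moments (w.r.t. the product states `φ^{⊗N}`) to `φ(b)·1`. -/
theorem commutative_law_of_large_numbers
    {A : Type*} [Ring A] [Algebra ℂ A] [StarRing A] [StarModule ℂ A]
    (φ : A →ₗ[ℂ] ℂ) (hφ_unital : φ 1 = 1) (hφ_pos : ∀ a, 0 ≤ φ (star a * a))
    (b : A) (hb : star b = b) (m : ℕ) (hm : 1 ≤ m) :
    Tendsto (fun N : ℕ => prodState φ N (((N : ℂ)⁻¹ • bPow b N 1) ^ m)) atTop
      (𝓝 (φ b ^ m)) := by
  classical
  -- the moment bound constant
  set C : ℝ := 1 + ∑ k ∈ Finset.range (m + 1), ‖φ (b ^ k)‖ with hCdef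
  have hC1 : 1 ≤ C := by
    have : (0:ℝ) ≤ ∑ k ∈ Finset.range (m + 1), ‖φ (b ^ k)‖ :=
      Finset.sum_nonneg fun _ _ => norm_nonneg _
    simp only [hCdef]; linarith
  have hC : ∀ k ≤ m, ‖φ (b ^ k)‖ ≤ C := by
    intro k hk
    have h1 : ‖φ (b ^ k)‖ ≤ ∑ k ∈ Finset.range (m + 1), ‖φ (b ^ k)‖ :=
      Finset.single_le_sum (f := fun k => ‖φ (b ^ k)‖) (fun _ _ => norm_nonneg _)
        (Finset.mem_range.2 (Nat.lt_succ_of_le hk))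
    simp only [hCdef]; linarith
  set r : ℕ → ℝ := fun N => (N.descFactorial m : ℝ) / (N : ℝ) ^ m with hrdef
  have hr : Tendsto r atTop (𝓝 1) := desc_ratio m
  rw [tendsto_iff_norm_sub_tendsto_zero]
  have hrabs : Tendsto (fun N => |r N - 1|) atTop (𝓝 0) := by
    have := (hr.sub (tendsto_const_nhds (x := (1:ℝ)))).abs
    simpa using this
  have he : Tendsto (fun N => |r N - 1| * ‖φ b ^ m‖ + |r N - 1| * C ^ m) atTop
      (𝓝 (0 * ‖φ b ^ m‖ + 0 * C ^ m)) :=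
    (hrabs.mul_const _).add (hrabs.mul_const _)
  rw [zero_mul, zero_mul, add_zero] at he
  refine squeeze_zero' (Eventually.of_forall fun N => norm_nonneg _) ?_ he
  filter_upwards [eventually_ge_atTop 1] with N hN1
  have hNR : (0:ℝ) < (N : ℝ) ^ m := by positivity
  have hNC : ((N : ℂ)) ≠ 0 := by
    simpa using (by omega : N ≠ 0)
  -- expansion of the moment
  have hT : prodState φ N (((N : ℂ)⁻¹ • bPow b N 1) ^ m)
      = (N : ℂ)⁻¹ ^ m * ∑ f : Fin m → Fin N,
          ∏ j, φ (b ^ (((List.finRange m).map f).count j)) := by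
    rw [smul_pow, map_smul, smul_eq_mul, prodState_bPow_pow]
  set g : (Fin m → Fin N) → ℂ :=
    fun f => ∏ j, φ (b ^ (((List.finRange m).map f).count j)) with hgdef
  set R : ℂ := ∑ f ∈ Finset.univ.filter
      (fun f : Fin m → Fin N => ¬ Function.Injective f), g f with hRdef
  have hsplit : ∑ f : Fin m → Fin N, g f
      = (N.descFactorial m : ℂ) * φ b ^ m + R := by
    rw [← Finset.sum_filter_add_sum_filter_not Finset.univ
      (fun f : Fin m → Fin N => Function.Injective f) g]
    congr 1
    rw [Finset.sum_congr rfl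
        (fun f hf => prod_count_inj φ hφ_unital b f (Finset.mem_filter.1 hf).2),
      Finset.sum_const, card_injective_fun, nsmul_eq_mul]
  -- number of non-injective maps
  have hcard : (Finset.univ.filter
      (fun f : Fin m → Fin N => ¬ Function.Injective f)).card
      = N ^ m - N.descFactorial m := by
    have h1 := Finset.card_filter_add_card_filter_not
      (s := (Finset.univ : Finset (Fin m → Fin N)))
      (p := fun f : Fin m → Fin N => Function.Injective f)
    have h2 : (Finset.univ : Finset (Fin m → Fin N)).card = N ^ m := by simp
    rw [card_injective_fun, h2] at h1
    omega
  have hdesc_le : N.descFactorial m ≤ N ^ m := Nat.descFactorial_le_pow N m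
  have hRbound : ‖R‖ ≤ ((N ^ m - N.descFactorial m : ℕ) : ℝ) * C ^ m := by
    rw [hRdef]
    calc ‖∑ f ∈ _, g f‖ ≤ ∑ f ∈ Finset.univ.filter
          (fun f : Fin m → Fin N => ¬ Function.Injective f), ‖g f‖ :=
          norm_sum_le _ _
      _ ≤ ∑ f ∈ Finset.univ.filter
          (fun f : Fin m → Fin N => ¬ Function.Injective f), C ^ m :=
          Finset.sum_le_sum fun f _ => prod_count_bound φ hφ_unital b C hC1 hC f
      _ = _ := by rw [Finset.sum_const, hcard, nsmul_eq_mul]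
  -- the key algebraic identity
  have hmain : prodState φ N (((N : ℂ)⁻¹ • bPow b N 1) ^ m) - φ b ^ m
      = ((N : ℂ)⁻¹ ^ m * (N.descFactorial m : ℂ) - 1) * φ b ^ m
        + (N : ℂ)⁻¹ ^ m * R := by
    rw [hT, hsplit]; ring
  rw [hmain]
  have hnorm1 : ‖(N : ℂ)⁻¹ ^ m * (N.descFactorial m : ℂ) - 1‖ = |r N - 1| := by
    have : (N : ℂ)⁻¹ ^ m * (N.descFactorial m : ℂ) - 1 = ((r N - 1 : ℝ) : ℂ) := by
      simp only [hrdef]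
      push_cast
      rw [div_eq_mul_inv, ← inv_pow]
      ring
    rw [this, Complex.norm_real, Real.norm_eq_abs]
  calc ‖((N : ℂ)⁻¹ ^ m * (N.descFactorial m : ℂ) - 1) * φ b ^ m
        + (N : ℂ)⁻¹ ^ m * R‖
      ≤ ‖((N : ℂ)⁻¹ ^ m * (N.descFactorial m : ℂ) - 1) * φ b ^ m‖
        + ‖(N : ℂ)⁻¹ ^ m * R‖ := norm_add_le _ _
    _ ≤ |r N - 1| * ‖φ b ^ m‖ + |r N - 1| * C ^ m := by
        refine add_le_add (le_of_eq (by rw [norm_mul, hnorm1])) ?_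
        rw [norm_mul, norm_pow, norm_inv, Complex.norm_natCast]
        have h3 : (N:ℝ)⁻¹ ^ m * ‖R‖
            ≤ (N:ℝ)⁻¹ ^ m * (((N ^ m - N.descFactorial m : ℕ) : ℝ) * C ^ m) := by
          gcongr
        refine h3.trans ?_
        have hrN : r N = (N.descFactorial m : ℝ) / (N:ℝ)^m := rfl
        have hN0 : ((N:ℝ)) ≠ 0 := by positivity
        have h4 : (N:ℝ)⁻¹ ^ m * (((N ^ m - N.descFactorial m : ℕ) : ℝ) * C ^ m)
            = (1 - r N) * C ^ m := by
          rw [hrN, Nat.cast_sub hdesc_le]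
          push_cast
          field_simp
          rw [one_div, inv_pow, inv_mul_cancel₀ (pow_ne_zero _ hN0), one_mul]
        rw [h4]
        have h5 : 1 - r N ≤ |r N - 1| := by
          rw [abs_sub_comm]; exact le_abs_self _
        have hCm : (0:ℝ) ≤ C ^ m := pow_nonneg (le_trans zero_le_one hC1) m
        exact mul_le_mul_of_nonneg_right h5 hCm
end
end

section
/- Let A be a unital *-algebra over ℂ and b ∈ A. For N ≥ 1 and i ∈ {1,…,N} let b(i) = 1⊗…⊗b⊗…⊗1 ∈ A^{⊗N}, b^{(N,n)} = Σ_{1 ≤ i_1 < … < i_n ≤ N} b(i_1)···b(i_n) for 1 ≤ n ≤ N (with b^{(N,0)} = 1), and let F^{(N,n)}(y) be the sum, over all ways to choose n distinct tensor positions and to place y at one of them and b at the other n−1 (with 1 elsewhere), of the corresponding elementary tensors. Then for 1 ≤ n < N the following identity holds in A^{⊗N}: b^{(N,1)} · b^{(N,n)} = (n+1)·b^{(N,n+1)} + (N−n+1)·b^{(N,n−1)} + F^{(N,n)}(b²−1). -/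
open scoped TensorProduct ComplexOrder
open Filter Topology

noncomputable section

lemma prod_list_elemAt {A : Type*} [Ring A] [Algebra ℂ A] (b : A) (N : ℕ)
    (l : List (Fin N)) (hl : l.Nodup) :
    ((l.map (elemAt b N)).prod)
      = PiTensorProduct.tprod ℂ (fun j => if j ∈ l then b else 1) := by
  induction l with
  | nil => simp [PiTensorProduct.one_def]; rfl
  | cons i l ih =>
    obtain ⟨hi, hl⟩ := List.nodup_cons.mp hl
    rw [List.map_cons, List.prod_cons, ih hl, elemAt, PiTensorProduct.tprod_mul_tprod]
    congr 1
    funext j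
    by_cases hji : j = i
    · subst hji; simp [Function.update_self, hi]
    · simp [Function.update_of_ne hji, hji]

lemma bPow_eq {A : Type*} [Ring A] [Algebra ℂ A] (b : A) (N n : ℕ) :
    bPow b N n = ∑ s ∈ Finset.powersetCard n (Finset.univ : Finset (Fin N)),
      PiTensorProduct.tprod ℂ (fun j => if j ∈ s then b else 1) := by
  unfold bPow
  refine Finset.sum_congr rfl fun s _ => ?_
  rw [prod_list_elemAt b N _ (s.sort_nodup _)]
  congr 1
  funext j
  simp [Finset.mem_sort]


/-- Equation (3.5): for `1 ≤ n < N`,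
`b^{(N,1)} b^{(N,n)} = (n+1) b^{(N,n+1)} + (N-n+1) b^{(N,n-1)} + F^{(N,n)}(b² - 1)`
holds in `A^{⊗N}`. -/
theorem bPow_one_mul_bPow
    {A : Type*} [Ring A] [Algebra ℂ A] (b : A) (N n : ℕ) (hn : 1 ≤ n) (hnN : n < N) :
    bPow b N 1 * bPow b N n =
      (n + 1) • bPow b N (n + 1) + (N - n + 1) • bPow b N (n - 1) +
        Fsum b (b * b - 1) N n := by
  classical
  set f : Finset (Fin N) → (⨂[ℂ] _ : Fin N, A) :=
    fun s => PiTensorProduct.tprod ℂ (fun j => if j ∈ s then b else 1) with hf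
  set P : ℕ → Finset (Finset (Fin N)) :=
    fun m => Finset.powersetCard m (Finset.univ : Finset (Fin N)) with hP
  have hb1 : bPow b N 1 = ∑ i : Fin N, f {i} := by
    rw [bPow_eq, Finset.powersetCard_one, Finset.sum_map]
    rfl
  -- key splitting of each term
  have hsplit : ∀ s ∈ P n, ∀ i : Fin N,
      f {i} * f s =
        if i ∈ s then
          (PiTensorProduct.tprod ℂ
              (fun j => if j = i then b * b - 1 else if j ∈ s then b else 1)
            + f (s.erase i))
        else f (insert i s) := by
    intro s _ i
    rw [hf]
    simp only
    rw [PiTensorProduct.tprod_mul_tprod]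
    by_cases his : i ∈ s
    · rw [if_pos his]
      have h1 : ((fun j => if j ∈ ({i} : Finset (Fin N)) then b else 1) *
          fun j => if j ∈ s then b else 1) =
          Function.update (fun j => if j ∈ s then b else (1:A)) i ((b*b-1) + 1) := by
        funext j
        by_cases hji : j = i
        · subst hji
          simp [Function.update_self, his, sub_add_cancel]
        · simp [Function.update_of_ne hji, hji, Finset.mem_singleton]
      rw [h1, MultilinearMap.map_update_add]
      congr 1
      · congr 1
        funext j
        by_cases hji : j = i
        · subst hji; simp [Function.update_self]
        · simp [Function.update_of_ne hji, hji]
      · congr 1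
        funext j
        by_cases hji : j = i
        · subst hji; simp [Function.update_self, Finset.mem_erase]
        · simp [Function.update_of_ne hji, Finset.mem_erase, hji]
    · rw [if_neg his]
      congr 1
      funext j
      by_cases hji : j = i
      · subst hji; simp [his, Finset.mem_insert]
      · simp [hji, Finset.mem_insert, Finset.mem_singleton]
  -- S3: insert sum
  have S3 : ∑ s ∈ P n, ∑ i ∈ sᶜ, f (insert i s) = (n + 1) • bPow b N (n + 1) := by
    rw [bPow_eq]
    show _ = (n + 1) • ∑ t ∈ P (n+1), f t
    rw [← Finset.sum_nsmul]
    have : ∀ t ∈ P (n+1), (n+1) • f t = ∑ i ∈ t, f t := by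
      intro t ht
      rw [Finset.sum_const, (Finset.mem_powersetCard.mp ht).2]
    rw [Finset.sum_congr rfl this, Finset.sum_sigma', Finset.sum_sigma']
    refine Finset.sum_nbij' (fun p => ⟨insert p.2 p.1, p.2⟩) (fun q => ⟨q.1.erase q.2, q.2⟩)
      ?_ ?_ ?_ ?_ ?_
    · rintro ⟨s, i⟩ hp
      rw [Finset.mem_sigma] at hp ⊢
      obtain ⟨hs, hi⟩ := hp
      rw [Finset.mem_compl] at hi
      refine ⟨?_, Finset.mem_insert_self _ _⟩
      rw [Finset.mem_powersetCard]
      exact ⟨Finset.subset_univ _, by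
        rw [Finset.card_insert_of_notMem hi, (Finset.mem_powersetCard.mp hs).2]⟩
    · rintro ⟨t, i⟩ hq
      rw [Finset.mem_sigma] at hq ⊢
      obtain ⟨ht, hi⟩ := hq
      refine ⟨?_, by simp⟩
      rw [Finset.mem_powersetCard]
      exact ⟨Finset.subset_univ _, by
        rw [Finset.card_erase_of_mem hi, (Finset.mem_powersetCard.mp ht).2]; rfl⟩
    · rintro ⟨s, i⟩ hp
      rw [Finset.mem_sigma] at hp
      have : i ∉ s := Finset.mem_compl.mp hp.2
      simp [Finset.erase_insert_eq_erase, Finset.erase_eq_of_notMem this]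
    · rintro ⟨t, i⟩ hq
      rw [Finset.mem_sigma] at hq
      simp [Finset.insert_erase hq.2]
    · rintro ⟨s, i⟩ _; rfl
  -- S2: erase sum
  have S2 : ∑ s ∈ P n, ∑ i ∈ s, f (s.erase i) = (N - n + 1) • bPow b N (n - 1) := by
    rw [bPow_eq]
    show _ = (N - n + 1) • ∑ t ∈ P (n-1), f t
    rw [← Finset.sum_nsmul]
    have : ∀ t ∈ P (n-1), (N - n + 1) • f t = ∑ i ∈ tᶜ, f t := by
      intro t ht
      rw [Finset.sum_const, Finset.card_compl, (Finset.mem_powersetCard.mp ht).2,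
        Fintype.card_fin]
      congr 1
      omega
    rw [Finset.sum_congr rfl this, Finset.sum_sigma', Finset.sum_sigma']
    refine Finset.sum_nbij' (fun p => ⟨p.1.erase p.2, p.2⟩) (fun q => ⟨insert q.2 q.1, q.2⟩)
      ?_ ?_ ?_ ?_ ?_
    · rintro ⟨s, i⟩ hp
      rw [Finset.mem_sigma] at hp ⊢
      obtain ⟨hs, hi⟩ := hp
      refine ⟨?_, by simp⟩
      rw [Finset.mem_powersetCard]
      exact ⟨Finset.subset_univ _, by
        rw [Finset.card_erase_of_mem hi, (Finset.mem_powersetCard.mp hs).2]⟩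
    · rintro ⟨t, i⟩ hq
      rw [Finset.mem_sigma] at hq ⊢
      obtain ⟨ht, hi⟩ := hq
      rw [Finset.mem_compl] at hi
      refine ⟨?_, Finset.mem_insert_self _ _⟩
      rw [Finset.mem_powersetCard]
      exact ⟨Finset.subset_univ _, by
        rw [Finset.card_insert_of_notMem hi, (Finset.mem_powersetCard.mp ht).2]
        omega⟩
    · rintro ⟨s, i⟩ hp
      rw [Finset.mem_sigma] at hp
      simp [Finset.insert_erase hp.2]
    · rintro ⟨t, i⟩ hq
      rw [Finset.mem_sigma] at hq
      have : i ∉ t := Finset.mem_compl.mp hq.2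
      simp [Finset.erase_insert_eq_erase, Finset.erase_eq_of_notMem this]
    · rintro ⟨s, i⟩ _; rfl
  -- combine
  calc bPow b N 1 * bPow b N n
      = ∑ i : Fin N, ∑ s ∈ P n, f {i} * f s := by
        rw [hb1, bPow_eq]
        show (∑ i : Fin N, f {i}) * ∑ s ∈ P n, f s = _
        rw [Finset.sum_mul_sum]
    _ = ∑ s ∈ P n, ∑ i : Fin N, f {i} * f s := Finset.sum_comm
    _ = ∑ s ∈ P n, ((∑ i ∈ s, (PiTensorProduct.tprod ℂ
              (fun j => if j = i then b * b - 1 else if j ∈ s then b else 1)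
            + f (s.erase i))) + ∑ i ∈ sᶜ, f (insert i s)) := by
        refine Finset.sum_congr rfl fun s hs => ?_
        rw [← Finset.sum_add_sum_compl s]
        congr 1
        · exact Finset.sum_congr rfl fun i hi => by rw [hsplit s hs i, if_pos hi]
        · exact Finset.sum_congr rfl fun i hi =>
            by rw [hsplit s hs i, if_neg (Finset.mem_compl.mp hi)]
    _ = (∑ s ∈ P n, ∑ i ∈ s, PiTensorProduct.tprod ℂ
            (fun j => if j = i then b * b - 1 else if j ∈ s then b else 1))
          + (∑ s ∈ P n, ∑ i ∈ s, f (s.erase i))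
          + ∑ s ∈ P n, ∑ i ∈ sᶜ, f (insert i s) := by
        rw [← Finset.sum_add_distrib, ← Finset.sum_add_distrib]
        refine Finset.sum_congr rfl fun s _ => ?_
        rw [Finset.sum_add_distrib]
    _ = Fsum b (b * b - 1) N n + (N - n + 1) • bPow b N (n - 1)
          + (n + 1) • bPow b N (n + 1) := by rw [S2, S3]; rfl
    _ = _ := by abel
end
end

section
/- Let G = (V,E) be a finite connected graph and, for h ≥ 1, let D^{[h]} be its h-distance matrix, the 0-1 matrix indexed by V×V with (D^{[h]})_{ξη} = 1 iff ∂_G(ξ,η) = h. For a partition λ = (j_1, j_2, …) of k (nonnegative integers with Σ_h h·j_h = k), let C(λ) ∈ M(V)^{⊗N} be the sum over all placements, of D^{[h]} at j_h distinct tensor positions for each h (with identity matrices elsewhere), of the corresponding elementary tensors. Then for every k ≥ 1 and N ≥ 1, the adjacency matrix A^{[N,k]} of the distance k-graph of G^N satisfies A^{[N,k]} = Σ_{λ ∈ Λ(k)} C(λ), where Λ(k) is the set of all partitions of k; equivalently A^{[N,k]} = A^{(N,k)} + Σ_{λ ∈ Λ(k)∖{λ_0}} C(λ), where λ_0 = (k,0,0,…)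 and A^{(N,k)} = C(λ_0) = Σ_{1 ≤ i_1 < … < i_k ≤ N} D^{[1]}(i_1)···D^{[1]}(i_k). -/
open scoped Classical
open Filter Topology

noncomputable section

/-- The `N`-fold Cartesian power of a graph `G`: two vertices `x y : Fin N → V` are
adjacent iff there is exactly one index `i` with `x i` adjacent to `y i` in `G`
and `x j = y j` for all `j ≠ i`. -/
def cartPower {V : Type*} (G : SimpleGraph V) (N : ℕ) : SimpleGraph (Fin N → V) where
  Adj x y := ∃! i, G.Adj (x i) (y i) ∧ ∀ j, j ≠ i → x j = y j
  symm := by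
    constructor
    rintro x y ⟨i, ⟨hadj, hrest⟩, huniq⟩
    exact ⟨i, ⟨hadj.symm, fun j hj => (hrest j hj).symm⟩,
      fun i' ⟨hadj', hrest'⟩ => huniq i' ⟨hadj'.symm, fun j hj => (hrest' j hj).symm⟩⟩
  loopless := by
    constructor
    rintro x ⟨i, ⟨hadj, -⟩, -⟩
    exact G.loopless.irrefl _ hadj

namespace Aux43

open SimpleGraph Finset

variable {V : Type*} [DecidableEq V] {G : SimpleGraph V} {N : ℕ}

lemma walk_update (x : Fin N → V) (i : Fin N) {a b : V} (w : G.Walk a b) (hx : x i = a) :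
    ∃ w' : (cartPower G N).Walk x (Function.update x i b), w'.length = w.length := by
  induction w generalizing x with
  | nil =>
    exact ⟨SimpleGraph.Walk.nil.copy rfl (by rw [← hx, Function.update_eq_self]), by simp⟩
  | @cons a c b hac w ih =>
    set x' := Function.update x i c with hx'def
    have hxx' : (cartPower G N).Adj x x' := by
      refine ⟨i, ⟨by simpa [x', hx] using hac,
        fun j hj => (Function.update_of_ne hj _ _).symm⟩, ?_⟩
      rintro j ⟨hadj', hrest'⟩
      by_contra hne
      rw [show x' j = x j from Function.update_of_ne hne _ _] at hadj'
      exact G.loopless.irrefl _ hadj'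
    obtain ⟨w₂, hw₂⟩ := ih x' (by simp [x'])
    refine ⟨(SimpleGraph.Walk.cons hxx' w₂).copy rfl (by simp [x']), by simp [hw₂]⟩

lemma exists_walk_sum (hconn : G.Connected) (s : Finset (Fin N)) :
    ∀ x y : Fin N → V, (∀ i ∉ s, x i = y i) →
      ∃ w : (cartPower G N).Walk x y, w.length = ∑ i ∈ s, G.dist (x i) (y i) := by
  induction s using Finset.induction with
  | empty =>
    intro x y h
    exact ⟨SimpleGraph.Walk.nil.copy rfl (funext fun i => h i (notMem_empty i)), by simp⟩
  | @insert i s hi ih =>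
    intro x y hxy
    obtain ⟨w₁, hw₁⟩ := hconn.exists_walk_length_eq_dist (x i) (y i)
    obtain ⟨w₁', hw₁'⟩ := walk_update x i w₁ rfl
    have hx' : ∀ j ∉ s, Function.update x i (y i) j = y j := by
      intro j hj
      by_cases hji : j = i
      · subst hji; simp
      · rw [Function.update_of_ne hji]
        exact hxy j (by simp [hji, hj])
    obtain ⟨w₂, hw₂⟩ := ih _ y hx'
    refine ⟨w₁'.append w₂, ?_⟩
    rw [SimpleGraph.Walk.length_append, hw₁', hw₁, hw₂, Finset.sum_insert hi]
    congr 1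
    refine Finset.sum_congr rfl fun j hj => ?_
    rw [Function.update_of_ne (fun h => hi (by rwa [h] at hj))]

lemma sum_dist_le_length (hconn : G.Connected) {x y : Fin N → V}
    (w : (cartPower G N).Walk x y) : ∑ i, G.dist (x i) (y i) ≤ w.length := by
  induction w with
  | nil => simp
  | @cons x z y h w ih =>
    obtain ⟨i, ⟨hadj, hrest⟩, -⟩ := h
    have key : ∀ j, G.dist (x j) (y j) ≤ (if j = i then 1 else 0) + G.dist (z j) (y j) := by
      intro j
      by_cases hji : j = i
      · subst hji
        have h1 : G.dist (x j) (z j) = 1 := SimpleGraph.dist_eq_one_iff_adj.mpr hadj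
        have ht := hconn.dist_triangle (u := x j) (v := z j) (w := y j)
        rw [if_pos rfl]
        omega
      · rw [hrest j hji]; simp
    calc ∑ j, G.dist (x j) (y j)
        ≤ ∑ j, ((if j = i then 1 else 0) + G.dist (z j) (y j)) :=
          Finset.sum_le_sum fun j _ => key j
      _ = 1 + ∑ j, G.dist (z j) (y j) := by
          rw [Finset.sum_add_distrib, Finset.sum_ite_eq' Finset.univ i (fun _ => 1),
            if_pos (Finset.mem_univ i)]
      _ ≤ 1 + w.length := by have := ih; omega
      _ = (SimpleGraph.Walk.cons _ w).length := by show 1 + w.length = w.length + 1; ring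

lemma cartPower_dist (hconn : G.Connected) (x y : Fin N → V) :
    (cartPower G N).dist x y = ∑ i, G.dist (x i) (y i) := by
  obtain ⟨w, hw⟩ := exists_walk_sum hconn Finset.univ x y
    (fun i hi => absurd (Finset.mem_univ i) hi)
  refine le_antisymm (hw ▸ SimpleGraph.dist_le w) ?_
  obtain ⟨w', hw'⟩ := SimpleGraph.Reachable.exists_walk_length_eq_dist (Nonempty.intro w)
  rw [← hw']
  exact sum_dist_le_length hconn w'

variable {N : ℕ}

lemma count_filter_map (g : Fin N → ℕ) {h : ℕ} (hh : 1 ≤ h) :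
    ((Multiset.map g Finset.univ.val).filter (· ≠ 0)).count h
      = (Finset.univ.filter fun i => g i = h).card := by
  rw [Multiset.count_filter, if_pos (by omega : h ≠ 0), Multiset.count_map]
  rw [Finset.card, Finset.filter_val]
  exact congrArg Multiset.card (Multiset.filter_congr fun a _ => eq_comm)

lemma parts_eq_filter_map (g : Fin N → ℕ) (m : Multiset ℕ) (h0 : 0 ∉ m)
    (hc : ∀ h, 1 ≤ h → (Finset.univ.filter fun i => g i = h).card = m.count h) :
    m = (Multiset.map g Finset.univ.val).filter (· ≠ 0) := by
  ext h
  rcases Nat.eq_zero_or_pos h with h0' | hpos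
  · subst h0'
    rw [Multiset.count_eq_zero_of_notMem h0]
    rw [Multiset.count_filter, if_neg (by simp)]
  · rw [count_filter_map g hpos, hc h hpos]

lemma sum_filter_map (g : Fin N → ℕ) :
    ((Multiset.map g Finset.univ.val).filter (· ≠ 0)).sum = ∑ i, g i := by
  have key := Multiset.filter_add_not (fun a => a ≠ 0) (Multiset.map g Finset.univ.val)
  have h2 : ((Multiset.map g Finset.univ.val).filter (fun a => ¬ a ≠ 0)).sum = 0 :=
    Multiset.sum_eq_zero (fun a ha => by simpa using Multiset.of_mem_filter ha)
  have := congrArg Multiset.sum key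
  rw [Multiset.sum_add, h2, add_zero] at this
  rw [this, Finset.sum]

end Aux43


/-- The distance `k`-graph of a graph `G`: same vertex set, with an edge `{x, y}`
whenever the graph distance of `x` and `y` in `G` equals `k`. -/
def distanceGraph {V : Type*} (G : SimpleGraph V) (k : ℕ) : SimpleGraph V where
  Adj x y := x ≠ y ∧ G.dist x y = k
  symm := by
    constructor
    rintro x y ⟨hne, hd⟩
    exact ⟨hne.symm, by rwa [SimpleGraph.dist_comm]⟩
  loopless := by constructor; rintro x ⟨hne, -⟩; exact hne rfl

/-- `M(V)^{⊗N}` is identified with matrices indexed by `V^N × V^N`: the elementary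
tensor `B_1 ⊗ ⋯ ⊗ B_N` has `(x, y)` entry `∏ i, (B i) (x i) (y i)`. -/
def elemTensor {V : Type*} [Fintype V] {N : ℕ} (B : Fin N → Matrix V V ℂ) :
    Matrix (Fin N → V) (Fin N → V) ℂ :=
  Matrix.of fun x y => ∏ i, B i (x i) (y i)

/-- The elementary tensor with `b` at the `i`-th position and identity matrices elsewhere. -/
def matAt {V : Type*} [Fintype V] {N : ℕ} (b : Matrix V V ℂ) (i : Fin N) :
    Matrix (Fin N → V) (Fin N → V) ℂ :=
  elemTensor (Function.update (fun _ => (1 : Matrix V V ℂ)) i b)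

/-- The `h`-distance matrix `D^{[h]}` of a graph: the 0-1 matrix indexed by `V × V`
whose `(ξ, η)` entry is `1` exactly when `∂_G(ξ, η) = h`. -/
def distMatrix {V : Type*} (G : SimpleGraph V) (h : ℕ) : Matrix V V ℂ :=
  Matrix.of fun ξ η => if G.dist ξ η = h then 1 else 0

/-- `C(λ) ∈ M(V)^{⊗N}` for a partition `λ` of `k` with multiplicities `j h` of the part
`h`: the sum over all placements of `D^{[h]}` at `j h` distinct tensor positions, for
each `h ≥ 1` (with identity matrices at the remaining positions), of the corresponding
elementary tensors. A placement is encoded by a function `f : Fin N → Fin (k + 1)`,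
position `i` carrying `D^{[f i]}` if `f i ≥ 1` and the identity if `f i = 0`. -/
def Cpart {V : Type*} [Fintype V] (G : SimpleGraph V) (N k : ℕ) (j : ℕ → ℕ) :
    Matrix (Fin N → V) (Fin N → V) ℂ :=
  ∑ f ∈ Finset.univ.filter
      (fun f : Fin N → Fin (k + 1) => ∀ h : ℕ, 1 ≤ h →
        (Finset.univ.filter fun i => (f i : ℕ) = h).card = j h),
    elemTensor fun i => if (f i : ℕ) = 0 then 1 else distMatrix G (f i)

lemma Aux43.entry_eq {V : Type*} [Fintype V] (G : SimpleGraph V) (hconn : G.Connected)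
    {N k : ℕ} (f : Fin N → Fin (k + 1)) (x y : Fin N → V) :
    elemTensor (fun i => if (f i : ℕ) = 0 then 1 else distMatrix G (f i)) x y
      = if (∀ i, G.dist (x i) (y i) = (f i : ℕ)) then 1 else 0 := by
  have hfac : ∀ i : Fin N,
      (if (f i : ℕ) = 0 then (1 : Matrix V V ℂ) else distMatrix G (f i)) (x i) (y i)
        = if G.dist (x i) (y i) = (f i : ℕ) then 1 else 0 := by
    intro i
    by_cases h0 : (f i : ℕ) = 0
    · rw [if_pos h0, h0, Matrix.one_apply]
      simp [hconn.dist_eq_zero_iff]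
    · rw [if_neg h0]; rfl
  simp only [elemTensor, Matrix.of_apply]
  rw [Finset.prod_congr rfl fun i _ => hfac i, Finset.prod_boole]
  simp

/-- Lemma 4.3: for a finite connected graph `G` and `k ≥ 1`, the adjacency matrix
`A^{[N,k]}` of the distance `k`-graph of `G^N` decomposes as `∑_{λ ∈ Λ(k)} C(λ)`, the
sum being over all partitions `λ` of `k` (the partition `λ` being recorded by its
multiplicity function `h ↦ j_h`). -/
theorem adjMatrix_distanceGraph_cartPower_eq_sum_Cpart
    {V : Type*} [Fintype V] [DecidableEq V] (G : SimpleGraph V) (hconn : G.Connected)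
    (k : ℕ) (hk : 1 ≤ k) (N : ℕ) (hN : 1 ≤ N) :
    (distanceGraph (cartPower G N) k).adjMatrix ℂ =
      ∑ p : Nat.Partition k, Cpart G N k fun h => Multiset.count h p.parts := by
  classical
  ext x y
  rw [SimpleGraph.adjMatrix_apply, Matrix.sum_apply]
  have entry := fun f : Fin N → Fin (k + 1) => Aux43.entry_eq G hconn (N := N) (k := k) f x y
  have centry : ∀ p : Nat.Partition k,
      Cpart G N k (fun h => Multiset.count h p.parts) x y
        = ((Finset.univ.filter (fun f : Fin N → Fin (k + 1) =>
            (∀ h : ℕ, 1 ≤ h → (Finset.univ.filter fun i => (f i : ℕ) = h).card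
              = Multiset.count h p.parts) ∧ ∀ i, G.dist (x i) (y i) = (f i : ℕ))).card : ℂ) := by
    intro p
    rw [Cpart, Matrix.sum_apply]
    simp only [entry]
    rw [Finset.sum_boole, Finset.filter_filter]
  rw [Finset.sum_congr rfl fun p _ => centry p]
  by_cases hS : ∑ i, G.dist (x i) (y i) = k
  · have hxy : x ≠ y := by
      intro h
      subst h
      simp only [SimpleGraph.dist_self, Finset.sum_const_zero] at hS
      omega
    rw [if_pos (show (distanceGraph (cartPower G N) k).Adj x y from
      ⟨hxy, (Aux43.cartPower_dist hconn x y).trans hS⟩)]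
    have hdle : ∀ i, G.dist (x i) (y i) < k + 1 := fun i =>
      Nat.lt_succ_of_le (hS ▸ Finset.single_le_sum (f := fun i => G.dist (x i) (y i))
        (fun _ _ => Nat.zero_le _) (Finset.mem_univ i))
    set f₀ : Fin N → Fin (k + 1) := fun i => ⟨G.dist (x i) (y i), hdle i⟩ with hf₀
    set m₀ : Multiset ℕ :=
      (Multiset.map (fun i => G.dist (x i) (y i)) Finset.univ.val).filter (· ≠ 0) with hm₀
    have hp₀pos : ∀ {a : ℕ}, a ∈ m₀ → 0 < a := fun {a} ha =>
      Nat.pos_of_ne_zero (Multiset.mem_filter.mp ha).2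
    have hp₀sum : m₀.sum = k := (Aux43.sum_filter_map _).trans hS
    set p₀ : Nat.Partition k := ⟨m₀, hp₀pos, hp₀sum⟩ with hp₀
    have key : ∀ p : Nat.Partition k,
        (Finset.univ.filter (fun f : Fin N → Fin (k + 1) =>
            (∀ h : ℕ, 1 ≤ h → (Finset.univ.filter fun i => (f i : ℕ) = h).card
              = Multiset.count h p.parts) ∧ ∀ i, G.dist (x i) (y i) = (f i : ℕ)))
          = if p = p₀ then {f₀} else ∅ := by
      intro p
      ext f
      simp only [Finset.mem_filter, Finset.mem_univ, true_and]
      split_ifs with hp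
      · subst hp
        simp only [Finset.mem_singleton]
        constructor
        · rintro ⟨-, hP⟩
          exact funext fun i => Fin.ext (hP i).symm
        · rintro rfl
          refine ⟨fun h hh => ?_, fun i => rfl⟩
          exact (Aux43.count_filter_map (fun i => G.dist (x i) (y i)) hh).symm
      · simp only [Finset.notMem_empty, iff_false, not_and]
        intro hcond hP
        apply hp
        apply Nat.Partition.ext
        have h1 := Aux43.parts_eq_filter_map (fun i => (f i : ℕ)) p.parts
          (fun hmem => lt_irrefl 0 (p.parts_pos hmem)) hcond
        rw [h1,
          show (fun i => ((f i : ℕ))) = fun i => G.dist (x i) (y i) from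
            funext fun i => (hP i).symm]
    rw [Finset.sum_congr rfl fun p _ => by rw [key p]]
    rw [Finset.sum_congr rfl fun p _ => by
      rw [apply_ite Finset.card, apply_ite (Nat.cast : ℕ → ℂ), Finset.card_singleton,
        Finset.card_empty, Nat.cast_one, Nat.cast_zero]]
    rw [Finset.sum_ite_eq' Finset.univ p₀ (fun _ => (1 : ℂ)), if_pos (Finset.mem_univ p₀)]
  · rw [if_neg (show ¬ (distanceGraph (cartPower G N) k).Adj x y from
      fun hadj => hS ((Aux43.cartPower_dist hconn x y).symm.trans hadj.2))]
    symm
    refine Finset.sum_eq_zero fun p _ => ?_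
    rw [Nat.cast_eq_zero, Finset.card_eq_zero, Finset.filter_eq_empty_iff]
    rintro f - ⟨hcond, hP⟩
    apply hS
    have h1 := Aux43.parts_eq_filter_map (fun i => (f i : ℕ)) p.parts
      (fun hmem => lt_irrefl 0 (p.parts_pos hmem)) hcond
    have h2 : p.parts.sum = ∑ i, (f i : ℕ) := by rw [h1, Aux43.sum_filter_map]
    have h3 : ∑ i, (f i : ℕ) = ∑ i, G.dist (x i) (y i) :=
      Finset.sum_congr rfl fun i _ => (hP i).symm
    rw [← h3, ← h2, p.parts_sum]
end
end
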